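/- Hurwitz-type persistence of zeros under locally uniform convergence: let U ⊆ ℂ be open and connected, let f and f_n (n ∈ ℕ) be holomorphic on U, and suppose f_n → f uniformly on compact subsets of U. If f is not identically zero on U and f(z₀) = 0 for some z₀ ∈ U, then for every ε > 0 there exists N such that for all n ≥ N the function f_n has a zero z with |z − z₀| < ε. -/

import Mathlib

open Metric Filter

/-- **Hurwitz-type persistence of zeros under locally uniform convergence.**
Let `U ⊆ ℂ` be open and connected, let `f` and the `F n` be holomorphic on `U`, and
suppose `F n → f` uniformly on every compact subset of `U`.  If `f` is not identically
zero on `U` and `f z₀ = 0` for some `z₀ ∈ U`, then for every `ε > 0` there is an `N`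
such that for all `n ≥ N` the function `F n` has a zero `z ∈ U` with `|z − z₀| < ε`. -/
theorem hurwitz_persistence_of_zeros (U : Set ℂ) (hU : IsOpen U) (hUc : IsConnected U)
    (f : ℂ → ℂ) (F : ℕ → ℂ → ℂ)
    (hf : DifferentiableOn ℂ f U) (hF : ∀ n, DifferentiableOn ℂ (F n) U)
    (hconv : ∀ K : Set ℂ, K ⊆ U → IsCompact K → TendstoUniformlyOn F f Filter.atTop K)
    (hne : ¬∀ z ∈ U, f z = 0) (z₀ : ℂ) (hz₀ : z₀ ∈ U) (hfz₀ : f z₀ = 0)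
    (ε : ℝ) (hε : 0 < ε) :
    ∃ N : ℕ, ∀ n ≥ N, ∃ z ∈ U, F n z = 0 ∧ ‖z - z₀‖ < ε := by
  have hfa : AnalyticOnNhd ℂ f U := hf.analyticOnNhd hU
  -- zeros of f are isolated near z₀
  have hiso : ∀ᶠ z in nhdsWithin z₀ {z₀}ᶜ, f z ≠ 0 := by
    rcases (hfa z₀ hz₀).eventually_eq_zero_or_eventually_ne_zero with h | h
    · exact absurd (fun z hz =>
        hfa.eqOn_zero_of_preconnected_of_eventuallyEq_zero hUc.isPreconnected hz₀
          (h.mono fun x hx => hx) hz) hne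
    · exact h
  obtain ⟨δ, hδpos, hδ⟩ := Metric.mem_nhdsWithin_iff.mp hiso
  obtain ⟨δ', hδ'pos, hδ'⟩ := Metric.isOpen_iff.mp hU z₀ hz₀
  -- choose a radius r < ε with closedBall z₀ r ⊆ U and f ≠ 0 on the sphere
  set r : ℝ := min (min δ δ' / 2) (ε / 2) with hrdef
  have hrpos : 0 < r := by positivity
  have hrδ : r < δ := (min_le_left _ _).trans_lt (by have := min_le_left δ δ'; linarith)
  have hrδ' : r < δ' := (min_le_left _ _).trans_lt (by have := min_le_right δ δ'; linarith)
  have hrε : r < ε := (min_le_right _ _).trans_lt (by linarith)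
  have hKU : closedBall z₀ r ⊆ U := fun z hz =>
    hδ' (lt_of_le_of_lt (mem_closedBall.mp hz) hrδ')
  have hKc : IsCompact (closedBall z₀ r) := isCompact_closedBall _ _
  -- f is nonzero on the sphere
  have hfs : ∀ z ∈ sphere z₀ r, f z ≠ 0 := by
    intro z hz
    have hzr : dist z z₀ = r := mem_sphere.mp hz
    refine hδ ⟨mem_ball.mpr (by rw [hzr]; exact hrδ), ?_⟩
    simp only [Set.mem_compl_iff, Set.mem_singleton_iff]
    intro h; rw [h] at hzr; simp at hzr; exact absurd hzr.symm ((ne_of_gt hrpos))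
  -- minimum of |f| on the sphere
  have hsne : (sphere z₀ r).Nonempty := (NormedSpace.sphere_nonempty).mpr hrpos.le
  have hcont : ContinuousOn (fun z => ‖f z‖) (sphere z₀ r) :=
    (hf.continuousOn.mono (sphere_subset_closedBall.trans hKU)).norm
  obtain ⟨w, hw, hwmin⟩ := (isCompact_sphere z₀ r).exists_isMinOn hsne hcont
  set m : ℝ := ‖f w‖ with hm
  have hmpos : 0 < m := norm_pos_iff.mpr (hfs w hw)
  -- uniform convergence on the closed ball
  have huc := hconv (closedBall z₀ r) hKU hKc
  rw [Metric.tendstoUniformlyOn_iff] at huc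
  obtain ⟨N, hN⟩ := (huc (m / 2) (by positivity)).exists_forall_of_atTop
  refine ⟨N, fun n hn => ?_⟩
  by_contra hcon
  push_neg at hcon
  have hFnz : ∀ z ∈ closedBall z₀ r, F n z ≠ 0 := by
    intro z hz h0
    have hlt : ‖z - z₀‖ < ε := by
      rw [← Complex.dist_eq]; exact (mem_closedBall.mp hz).trans_lt hrε
    exact absurd (hcon z (hKU hz) h0) (not_le.mpr hlt)
  -- the open set where F n is defined and nonzero
  set S : Set ℂ := U ∩ (F n) ⁻¹' ({0}ᶜ) with hS
  have hSopen : IsOpen S :=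
    (hF n).continuousOn.isOpen_inter_preimage hU isOpen_compl_singleton
  have hKS : closedBall z₀ r ⊆ S := fun z hz => ⟨hKU hz, hFnz z hz⟩
  have hinv : DifferentiableOn ℂ (fun z => (F n z)⁻¹) S :=
    DifferentiableOn.inv ((hF n).mono Set.inter_subset_left) fun z hz => hz.2
  have hdc : DiffContOnCl ℂ (fun z => (F n z)⁻¹) (ball z₀ r) := by
    refine DifferentiableOn.diffContOnCl ?_
    apply hinv.mono
    rw [closure_ball z₀ (ne_of_gt hrpos)]
    exact hKS
  -- on the sphere, ‖F n z‖ > m / 2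
  have hbound : ∀ z ∈ frontier (ball z₀ r), ‖(F n z)⁻¹‖ ≤ 2 / m := by
    rw [frontier_ball z₀ (ne_of_gt hrpos)]
    intro z hz
    have h1 : dist (f z) (F n z) < m / 2 := hN n hn z (sphere_subset_closedBall hz)
    have h2 : m ≤ ‖f z‖ := hwmin hz
    have h3 : m / 2 ≤ ‖F n z‖ := by
      rw [dist_eq_norm] at h1
      have := norm_sub_norm_le (f z) (F n z)
      linarith
    rw [norm_inv]
    calc ‖F n z‖⁻¹ ≤ (m / 2)⁻¹ := inv_anti₀ (by positivity) h3
    _ = 2 / m := by rw [inv_div]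
  -- maximum modulus principle applied to the inverse
  have hz₀cl : z₀ ∈ closure (ball z₀ r) := by
    rw [closure_ball z₀ (ne_of_gt hrpos)]; exact mem_closedBall_self hrpos.le
  have hkey : ‖(F n z₀)⁻¹‖ ≤ 2 / m :=
    Complex.norm_le_of_forall_mem_frontier_norm_le isBounded_ball hdc hbound hz₀cl
  -- but F n z₀ is small
  have hsmall : ‖F n z₀‖ < m / 2 := by
    have h1 : dist (f z₀) (F n z₀) < m / 2 := hN n hn z₀ (mem_closedBall_self hrpos.le)
    rw [dist_eq_norm, hfz₀, zero_sub, norm_neg] at h1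
    exact h1
  have hx : (0:ℝ) < ‖F n z₀‖ :=
    norm_pos_iff.mpr (hFnz z₀ (mem_closedBall_self hrpos.le))
  rw [norm_inv] at hkey
  have hfin : m / 2 ≤ ‖F n z₀‖ := by
    have := inv_anti₀ (inv_pos.mpr hx) hkey
    rwa [inv_inv, inv_div] at this
  linarith
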